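/- There is no 3-element extreme subset of ZMod 10 containing 0; consequently, no 6-element subset of ZMod 10 containing 0 can be written as A + H where A is a 3-element extreme set and H is a 2-element coset. -/

import Mathlib

open Complex Finset Pointwise

/-- A finite subset `E` of `ZMod n` is extreme if there is a function supported
on `E`, unimodular on `E`, with vanishing autocorrelation at nonzero shifts. -/
def IsExtremeSet {n : ℕ} [NeZero n] (E : Finset (ZMod n)) : Prop :=
  ∃ f : ZMod n → ℂ,
    (∀ x ∈ E, ‖f x‖ = 1) ∧ (∀ x ∉ E, f x = 0) ∧
    ∀ d : ZMod n, d ≠ 0 → ∑ x : ZMod n, f x * (starRingEnd ℂ) (f (x - d)) = 0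

lemma keyfact : ∀ a b c : ZMod 10, a ≠ b → a ≠ c → b ≠ c →
    ∃ d : ZMod 10, d ≠ 0 ∧ (({a,b,c} : Finset (ZMod 10)).filter
      (fun x => x - d ∈ ({a,b,c} : Finset (ZMod 10)))).card = 1 := by decide

lemma no_card3_extreme (E : Finset (ZMod 10)) (hE : E.card = 3) :
    ¬ IsExtremeSet E := by
  rintro ⟨f, h1, h2, h3⟩
  obtain ⟨a, b, c, hab, hac, hbc, rfl⟩ := Finset.card_eq_three.mp hE
  obtain ⟨d, hd, hcard⟩ := keyfact a b c hab hac hbc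
  obtain ⟨x₀, hx₀⟩ := Finset.card_eq_one.mp hcard
  set E : Finset (ZMod 10) := {a, b, c} with hEdef
  have hx₀mem : x₀ ∈ E.filter (fun x => x - d ∈ E) := hx₀ ▸ Finset.mem_singleton_self x₀
  rw [Finset.mem_filter] at hx₀mem
  have hsum : ∑ x : ZMod 10, f x * (starRingEnd ℂ) (f (x - d))
      = ∑ x ∈ E.filter (fun x => x - d ∈ E), f x * (starRingEnd ℂ) (f (x - d)) := by
    refine (Finset.sum_subset (Finset.subset_univ _) ?_).symm
    intro x _ hx
    rw [Finset.mem_filter] at hx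
    push_neg at hx
    by_cases hxE : x ∈ E
    · rw [h2 _ (hx hxE), map_zero, mul_zero]
    · rw [h2 _ hxE, zero_mul]
  have h0 := h3 d hd
  rw [hsum, hx₀, Finset.sum_singleton] at h0
  have habs : ‖f x₀ * (starRingEnd ℂ) (f (x₀ - d))‖ = 1 := by
    rw [norm_mul, Complex.norm_conj, h1 _ hx₀mem.1, h1 _ hx₀mem.2, mul_one]
  rw [h0, norm_zero] at habs
  exact zero_ne_one habs

theorem no_three_element_extreme_in_zmod10 :
    (∀ E : Finset (ZMod 10), E.card = 3 → (0 : ZMod 10) ∈ E → ¬ IsExtremeSet E) ∧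
    (∀ S : Finset (ZMod 10), S.card = 6 → (0 : ZMod 10) ∈ S →
      ¬ ∃ (A H : Finset (ZMod 10)), A.card = 3 ∧ IsExtremeSet A ∧ H.card = 2 ∧
          (∃ (t : ZMod 10) (K : AddSubgroup (ZMod 10)),
            (H : Set (ZMod 10)) = (fun k => t + k) '' (K : Set (ZMod 10))) ∧
          S = A + H) := by
  constructor
  · intro E hE _ h
    exact no_card3_extreme E hE h
  · rintro S _ _ ⟨A, H, hA3, hAext, -, -, -⟩
    exact no_card3_extreme A hA3 hAext
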